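/- For a matroid M and disjoint subsets Q, R of its ground set, and any element e ∈ E(M) − (Q ∪ R), either κ_{M\e}(Q,R) = κ_M(Q,R) or κ_{M/e}(Q,R) = κ_M(Q,R). -/

import Mathlib

open Set

variable {α : Type*}

/-- The rank of a set `X` in a matroid `M`: the supremum of cardinalities of
independent subsets of `X`. -/
noncomputable def Matroid.rk' (M : Matroid α) (X : Set α) : ℕ :=
  sSup {n | ∃ I, M.Indep I ∧ I ⊆ X ∧ I.ncard = n}

/-- The connectivity function `λ_M(X) = r(X) + r(E \ X) - r(M)`. -/
noncomputable def Matroid.lam (M : Matroid α) (X : Set α) : ℕ :=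
  M.rk' X + M.rk' (M.E \ X) - M.rk' M.E

/-- The connectivity `κ_M(Q,R)` between disjoint sets `Q` and `R`. -/
noncomputable def Matroid.kappa (M : Matroid α) (Q R : Set α) : ℕ :=
  sInf {k | ∃ X, Q ⊆ X ∧ X ⊆ M.E \ R ∧ M.lam X = k}

/-- Deletion of a set of elements. -/
def Matroid.del (M : Matroid α) (D : Set α) : Matroid α := M.restrict (M.E \ D)

/-- Contraction of a set of elements, defined via duality: `M / C = (M* \ C)*`. -/
def Matroid.con (M : Matroid α) (C : Set α) : Matroid α := (M✶.del C)✶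

/-- `N` is a minor of `M` if it is obtained by contracting a set `C` and deleting a
disjoint set `D`. -/
def Matroid.IsMinorOf (N M : Matroid α) : Prop :=
  ∃ C D, C ⊆ M.E ∧ D ⊆ M.E ∧ Disjoint C D ∧ N = (M.con C).del D

/-- `e` is deletable with respect to `(Q,R)`. -/
noncomputable def Matroid.Deletable (M : Matroid α) (Q R : Set α) (e : α) : Prop :=
  (M.del {e}).kappa Q R = M.kappa Q R

/-- `e` is contractible with respect to `(Q,R)`. -/
noncomputable def Matroid.Contractible (M : Matroid α) (Q R : Set α) (e : α) : Prop :=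
  (M.con {e}).kappa Q R = M.kappa Q R

/-- `e` is flexible with respect to `(Q,R)` if it is both deletable and contractible. -/
noncomputable def Matroid.Flexible (M : Matroid α) (Q R : Set α) (e : α) : Prop :=
  M.Deletable Q R e ∧ M.Contractible Q R e

/-- The local connectivity `⊓_M(A,B) = r(A) + r(B) - r(A ∪ B)`. -/
noncomputable def Matroid.localConn (M : Matroid α) (A B : Set α) : ℕ :=
  M.rk' A + M.rk' B - M.rk' (A ∪ B)

namespace Matroid

variable {M : Matroid α} {I J X Y A B C D Q R : Set α}

lemma basis'_ncard_le [M.Finite] (hI : M.Indep I) (hIX : I ⊆ X) (hJ : M.IsBasis' J X) :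
    I.ncard ≤ J.ncard := by
  obtain ⟨J', hJ', hIJ'⟩ := hI.subset_isBasis'_of_subset hIX
  have h1 : I.ncard ≤ J'.ncard :=
    ncard_le_ncard hIJ' (M.set_finite J' hJ'.indep.subset_ground)
  have h2 : J'.ncard = J.ncard := by
    have hb1 : (M ↾ X).IsBase J' := isBase_restrict_iff'.2 hJ'
    have hb2 : (M ↾ X).IsBase J := isBase_restrict_iff'.2 hJ
    exact hb1.ncard_eq_ncard_of_isBase hb2
  omega

lemma rk'_eq_ncard_basis' [M.Finite] (hI : M.IsBasis' I X) : M.rk' X = I.ncard := by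
  have hne : (0:ℕ) ∈ {n | ∃ J, M.Indep J ∧ J ⊆ X ∧ J.ncard = n} :=
    ⟨∅, M.empty_indep, empty_subset _, ncard_empty _⟩
  apply le_antisymm
  · refine csSup_le ⟨0, hne⟩ ?_
    rintro n ⟨J, hJ, hJX, rfl⟩
    exact basis'_ncard_le hJ hJX hI
  · apply le_csSup
    · exact ⟨I.ncard, by rintro n ⟨J, hJ, hJX, rfl⟩; exact basis'_ncard_le hJ hJX hI⟩
    · exact ⟨I, hI.indep, hI.subset, rfl⟩

lemma ncard_le_rk' [M.Finite] (hI : M.Indep I) (hIX : I ⊆ X) : I.ncard ≤ M.rk' X := by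
  obtain ⟨J, hJ⟩ := M.exists_isBasis' X
  rw [rk'_eq_ncard_basis' hJ]
  exact basis'_ncard_le hI hIX hJ

lemma rk'_mono [M.Finite] (hXY : X ⊆ Y) : M.rk' X ≤ M.rk' Y := by
  obtain ⟨I, hI⟩ := M.exists_isBasis' X
  rw [rk'_eq_ncard_basis' hI]
  exact ncard_le_rk' hI.indep (hI.subset.trans hXY)

lemma rk'_le_ncard [M.Finite] (hX : X ⊆ M.E) : M.rk' X ≤ X.ncard := by
  obtain ⟨I, hI⟩ := M.exists_isBasis' X
  rw [rk'_eq_ncard_basis' hI]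
  exact ncard_le_ncard hI.subset (M.set_finite X hX)

lemma rk'_inter_ground (M : Matroid α) (X : Set α) : M.rk' (X ∩ M.E) = M.rk' X := by
  unfold rk'
  congr 1
  ext n
  constructor
  · rintro ⟨J, hJ, hJX, rfl⟩; exact ⟨J, hJ, hJX.trans inter_subset_left, rfl⟩
  · rintro ⟨J, hJ, hJX, rfl⟩; exact ⟨J, hJ, subset_inter hJX hJ.subset_ground, rfl⟩

lemma rk'_submod [M.Finite] (A B : Set α) :
    M.rk' (A ∪ B) + M.rk' (A ∩ B) ≤ M.rk' A + M.rk' B := by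
  wlog hAE : A ⊆ M.E ∧ B ⊆ M.E generalizing A B with H
  · have := H (A ∩ M.E) (B ∩ M.E) ⟨inter_subset_right, inter_subset_right⟩
    have e1 : A ∩ M.E ∪ B ∩ M.E = (A ∪ B) ∩ M.E := by ext x; simp; tauto
    have e2 : A ∩ M.E ∩ (B ∩ M.E) = (A ∩ B) ∩ M.E := by ext x; simp; tauto
    rwa [e1, e2, rk'_inter_ground, rk'_inter_ground, rk'_inter_ground,
      rk'_inter_ground] at this
  obtain ⟨hA, hB⟩ := hAE
  obtain ⟨I, hI⟩ := M.exists_isBasis' (A ∩ B)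
  obtain ⟨J, hJ, hIJ⟩ := hI.indep.subset_isBasis'_of_subset (hI.subset.trans
    (inter_subset_left.trans subset_union_left))
  rw [rk'_eq_ncard_basis' hJ, rk'_eq_ncard_basis' hI]
  have hJfin : J.Finite := M.set_finite J hJ.indep.subset_ground
  have h1 : (J ∩ A).ncard ≤ M.rk' A := ncard_le_rk' (hJ.indep.subset inter_subset_left)
    inter_subset_right
  have h2 : (J ∩ B).ncard ≤ M.rk' B := ncard_le_rk' (hJ.indep.subset inter_subset_left)
    inter_subset_right
  have hu : (J ∩ A) ∪ (J ∩ B) = J := by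
    rw [← inter_union_distrib_left, inter_eq_self_of_subset_left hJ.subset]
  have hi : I ⊆ (J ∩ A) ∩ (J ∩ B) := by
    intro x hx
    exact ⟨⟨hIJ hx, (hI.subset hx).1⟩, hIJ hx, (hI.subset hx).2⟩
  have hcard := ncard_union_add_ncard_inter (J ∩ A) (J ∩ B)
    (hJfin.subset inter_subset_left) (hJfin.subset inter_subset_left)
  have hIle : I.ncard ≤ ((J ∩ A) ∩ (J ∩ B)).ncard :=
    ncard_le_ncard hi (hJfin.subset (inter_subset_left.trans inter_subset_left))
  rw [hu] at hcard
  omega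

lemma rk'_union_le [M.Finite] (A B : Set α) : M.rk' (A ∪ B) ≤ M.rk' A + M.rk' B :=
  le_trans (Nat.le_add_right _ _) (rk'_submod A B)

lemma rk'_ground_le [M.Finite] (X : Set α) : M.rk' M.E ≤ M.rk' X + M.rk' (M.E \ X) :=
  le_trans (rk'_mono (by intro x hx; by_cases h : x ∈ X <;> simp [h, hx]))
    (rk'_union_le X (M.E \ X))

lemma rk'_dual_add [M.Finite] (hX : X ⊆ M.E) :
    M✶.rk' X + M.rk' M.E = X.ncard + M.rk' (M.E \ X) := by
  obtain ⟨I, hI⟩ := M.exists_isBasis (M.E \ X) diff_subset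
  obtain ⟨B, hB, hIB⟩ := hI.indep.exists_isBase_superset
  have hBE : B ⊆ M.E := hB.subset_ground
  have hIeq : I = B ∩ (M.E \ X) :=
    hI.eq_of_subset_indep (hB.indep.subset inter_subset_left)
      (subset_inter hIB hI.subset) inter_subset_right
  have hXBE : X \ B ⊆ M✶.E := diff_subset.trans hX
  have hkey : M✶.IsBasis (X \ B) X := by
    refine Indep.isBasis_of_forall_insert ?_ diff_subset ?_
    · exact dual_indep_iff_exists'.2 ⟨diff_subset.trans hX, B, hB, disjoint_sdiff_left⟩
    · rintro f ⟨hfX, hfnB⟩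
      have hfB : f ∈ B := by by_contra h; exact hfnB ⟨hfX, h⟩
      constructor
      · intro hcon
        obtain ⟨-, B'', hB'', hdisj⟩ := dual_indep_iff_exists'.1 hcon
        set S := M.E \ insert f (X \ B) with hS
        have hB''S : B'' ⊆ S := fun x hx =>
          ⟨hB''.subset_ground hx, fun hmem => disjoint_left.1 hdisj hmem hx⟩
        have hfI : f ∉ I := fun h => (hI.subset h).2 hfX
        have hIBf : I ⊆ B \ {f} := fun x hx => ⟨hIB hx, fun h => hfI (h ▸ hx)⟩
        have hSb : M.IsBasis (B \ {f}) S := by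
          refine Indep.isBasis_of_forall_insert (hB.indep.subset diff_subset) ?_ ?_
          · intro x hx
            exact ⟨hBE hx.1, by
              rintro (rfl | ⟨hxX, hxB⟩)
              · exact hx.2 rfl
              · exact hxB hx.1⟩
          · rintro g ⟨hgS, hgnBf⟩
            have hgne : g ≠ f := fun h => hgS.2 (by rw [h]; exact mem_insert f _)
            have hgnB : g ∉ B := fun h => hgnBf ⟨h, hgne⟩
            have hgnX : g ∉ X := fun h => hgS.2 (mem_insert_of_mem _ ⟨h, hgnB⟩)
            have hgEX : g ∈ (M.E \ X) \ I := ⟨⟨hgS.1, hgnX⟩, fun h => hgnB (hIB h)⟩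
            constructor
            · intro hind
              have : M.Indep (insert g I) := hind.subset (insert_subset_insert hIBf)
              exact (hI.insert_dep hgEX).1 this
            · exact insert_subset hgS.1 (diff_subset.trans hBE)
        have h1 : B''.ncard ≤ M.rk' S := ncard_le_rk' hB''.indep hB''S
        have h2 : M.rk' S = (B \ {f}).ncard := rk'_eq_ncard_basis' hSb.isBasis'
        have h3 : (B \ {f}).ncard + 1 = B.ncard :=
          ncard_diff_singleton_add_one hfB (M.set_finite B hBE)
        have h4 : B''.ncard = B.ncard := hB''.ncard_eq_ncard_of_isBase hB
        omega
      · exact insert_subset (hX hfX) hXBE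
  have hr1 : M✶.rk' X = (X \ B).ncard := rk'_eq_ncard_basis' hkey.isBasis'
  have hr2 : M.rk' (M.E \ X) = I.ncard := rk'_eq_ncard_basis' hI.isBasis'
  have hr3 : M.rk' M.E = B.ncard := rk'_eq_ncard_basis' hB.isBasis_ground.isBasis'
  have hXfin : X.Finite := M.set_finite X hX
  have hc1 : (X ∩ B).ncard + (X \ B).ncard = X.ncard :=
    ncard_inter_add_ncard_diff_eq_ncard X B hXfin
  have hBeq : B = I ∪ (B ∩ X) := by
    rw [hIeq]; ext x
    simp only [mem_union, mem_inter_iff, mem_diff]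
    constructor
    · intro h; by_cases hx : x ∈ X
      · exact Or.inr ⟨h, hx⟩
      · exact Or.inl ⟨h, hBE h, hx⟩
    · rintro (⟨h, -⟩ | ⟨h, -⟩) <;> exact h
  have hdisjI : Disjoint I (B ∩ X) := by
    rw [hIeq]
    exact Disjoint.mono inter_subset_right inter_subset_right disjoint_sdiff_left
  have hc2 : B.ncard = I.ncard + (B ∩ X).ncard := by
    conv_lhs => rw [hBeq]
    exact ncard_union_eq hdisjI
      (M.set_finite I (hI.indep.subset_ground))
      (M.set_finite _ (inter_subset_left.trans hBE))
  rw [inter_comm] at hc1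
  rw [hr1, hr2, hr3]
  omega

lemma rk'_restrict (M : Matroid α) (R X : Set α) : (M ↾ R).rk' X = M.rk' (X ∩ R) := by
  unfold rk'
  congr 1
  ext n
  constructor
  · rintro ⟨J, hJ, hJX, rfl⟩
    exact ⟨J, (restrict_indep_iff.1 hJ).1, subset_inter hJX (restrict_indep_iff.1 hJ).2, rfl⟩
  · rintro ⟨J, hJ, hJX, rfl⟩
    exact ⟨J, restrict_indep_iff.2 ⟨hJ, hJX.trans inter_subset_right⟩,
      hJX.trans inter_subset_left, rfl⟩

@[simp] lemma del_ground (M : Matroid α) (D : Set α) : (M.del D).E = M.E \ D := rfl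

@[simp] lemma con_ground (M : Matroid α) (C : Set α) : (M.con C).E = M.E \ C := rfl

lemma rk'_del (M : Matroid α) (D X : Set α) : (M.del D).rk' X = M.rk' (X ∩ (M.E \ D)) :=
  rk'_restrict M (M.E \ D) X

instance del_finite [M.Finite] : (M.del D).Finite := ⟨M.ground_finite.subset diff_subset⟩

instance con_finite [M.Finite] : (M.con C).Finite := ⟨M.ground_finite.subset diff_subset⟩

lemma rk'_con_add [M.Finite] (hC : C ⊆ M.E) (hX : X ⊆ M.E \ C) :
    (M.con C).rk' X + M.rk' C = M.rk' (X ∪ C) := by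
  have hEfin := M.ground_finite
  have hXE : X ⊆ M.E := hX.trans diff_subset
  have h1 : (M.con C).rk' X + (M✶.del C).rk' (M.E \ C) =
      X.ncard + (M✶.del C).rk' ((M.E \ C) \ X) := by
    have := rk'_dual_add (M := M✶.del C) (X := X) (by simpa using hX)
    simp at this; exact this
  have h2 : (M✶.del C).rk' (M.E \ C) = M✶.rk' (M.E \ C) := by
    rw [show M✶.del C = M✶ ↾ (M.E \ C) from rfl, rk'_restrict,
      inter_eq_self_of_subset_left subset_rfl]
  have h3 : (M✶.del C).rk' ((M.E \ C) \ X) = M✶.rk' ((M.E \ C) \ X) := by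
    rw [show M✶.del C = M✶ ↾ (M.E \ C) from rfl, rk'_restrict,
      inter_eq_self_of_subset_left diff_subset]
  have h4 : M✶.rk' (M.E \ C) + M.rk' M.E = (M.E \ C).ncard + M.rk' C := by
    have := rk'_dual_add (M := M) (X := M.E \ C) diff_subset
    rwa [diff_diff_cancel_left hC] at this
  have h5 : M✶.rk' ((M.E \ C) \ X) + M.rk' M.E = ((M.E \ C) \ X).ncard + M.rk' (X ∪ C) := by
    have hsub : (M.E \ C) \ X ⊆ M.E := diff_subset.trans diff_subset
    have := rk'_dual_add (M := M) (X := (M.E \ C) \ X) hsub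
    have hEset : M.E \ ((M.E \ C) \ X) = X ∪ C := by
      ext x
      constructor
      · rintro ⟨hxE, hx⟩
        rw [mem_diff] at hx
        push_neg at hx
        by_cases hxC : x ∈ C
        · exact Or.inr hxC
        · exact Or.inl (hx ⟨hxE, hxC⟩)
      · rintro (hx | hx)
        · exact ⟨hXE hx, fun h => h.2 hx⟩
        · exact ⟨hC hx, fun h => h.1.2 hx⟩
    rwa [hEset] at this
  have h6 : X.ncard + ((M.E \ C) \ X).ncard = (M.E \ C).ncard := by
    rw [add_comm]
    exact ncard_diff_add_ncard_of_subset hX (hEfin.subset diff_subset)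
  rw [h2, h3] at h1
  omega

lemma lam_add [M.Finite] (X : Set α) :
    M.lam X + M.rk' M.E = M.rk' X + M.rk' (M.E \ X) := by
  unfold lam
  have := rk'_ground_le (M := M) X
  omega

lemma kappa_mem [M.Finite] (hQ : Q ⊆ M.E) (hQR : Disjoint Q R) :
    ∃ X, Q ⊆ X ∧ X ⊆ M.E \ R ∧ M.lam X = M.kappa Q R := by
  have hne : (Set.Nonempty {k | ∃ X, Q ⊆ X ∧ X ⊆ M.E \ R ∧ M.lam X = k}) :=
    ⟨M.lam Q, Q, subset_rfl, subset_diff.2 ⟨hQ, hQR⟩, rfl⟩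
  exact Nat.sInf_mem hne

lemma kappa_le [M.Finite] (hQX : Q ⊆ X) (hXR : X ⊆ M.E \ R) : M.kappa Q R ≤ M.lam X :=
  Nat.sInf_le ⟨X, hQX, hXR, rfl⟩

end Matroid

theorem stmt_0 (M : Matroid α) [M.Finite] (Q R : Set α) (hQ : Q ⊆ M.E) (hR : R ⊆ M.E)
    (hQR : Disjoint Q R) (e : α) (he : e ∈ M.E \ (Q ∪ R)) :
    (M.del {e}).kappa Q R = M.kappa Q R ∨ (M.con {e}).kappa Q R = M.kappa Q R := by
  classical
  open Matroid in
  obtain ⟨heE, heQR⟩ := he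
  have heQ : e ∉ Q := fun h => heQR (Or.inl h)
  have heR : e ∉ R := fun h => heQR (Or.inr h)
  have hsingle : ({e} : Set α) ⊆ M.E := singleton_subset_iff.2 heE
  have hre : M.rk' {e} ≤ 1 := le_trans (Matroid.rk'_le_ncard hsingle) (by simp)
  have hrF : M.rk' (M.E \ {e}) ≤ M.rk' M.E := Matroid.rk'_mono diff_subset
  -- instantiated lam formulas
  have hdel_lam : ∀ Z, Z ⊆ M.E \ {e} → (M.del {e}).lam Z + M.rk' (M.E \ {e}) =
      M.rk' Z + M.rk' ((M.E \ {e}) \ Z) := by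
    intro Z hZ
    have h := Matroid.lam_add (M := M.del {e}) Z
    rw [Matroid.del_ground] at h
    simp only [Matroid.rk'_del] at h
    rwa [inter_self, inter_eq_self_of_subset_left hZ,
      inter_eq_self_of_subset_left diff_subset] at h
  have hcon_lam : ∀ Z, Z ⊆ M.E \ {e} → (M.con {e}).lam Z + M.rk' M.E + M.rk' {e} =
      M.rk' (Z ∪ {e}) + M.rk' (((M.E \ {e}) \ Z) ∪ {e}) := by
    intro Z hZ
    have h := Matroid.lam_add (M := M.con {e}) Z
    rw [Matroid.con_ground] at h
    have h1 := Matroid.rk'_con_add (M := M) hsingle hZ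
    have h2 := Matroid.rk'_con_add (M := M) hsingle (X := (M.E \ {e}) \ Z) diff_subset
    have h3 := Matroid.rk'_con_add (M := M) hsingle (X := M.E \ {e}) subset_rfl
    have hFe : (M.E \ {e}) ∪ {e} = M.E := by
      rw [diff_union_self]
      exact union_eq_self_of_subset_right hsingle
    rw [hFe] at h3
    omega
  have hM_lam : ∀ Z, M.lam Z + M.rk' M.E = M.rk' Z + M.rk' (M.E \ Z) :=
    fun Z => Matroid.lam_add Z
  obtain ⟨X₀, hQX₀, hX₀, hlam₀⟩ := Matroid.kappa_mem (M := M) hQ hQR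
  have hX₀E : X₀ ⊆ M.E := hX₀.trans diff_subset
  set k := M.kappa Q R with hk
  -- a set Z witnessing both bounds
  have hZbounds : ∃ Z, Q ⊆ Z ∧ Z ⊆ (M.E \ {e}) \ R ∧
      (M.del {e}).lam Z ≤ M.lam X₀ ∧ (M.con {e}).lam Z ≤ M.lam X₀ := by
    refine ⟨X₀ \ {e}, ?_, ?_, ?_, ?_⟩
    · intro x hx
      refine ⟨hQX₀ hx, ?_⟩
      simp only [mem_singleton_iff]
      rintro rfl
      exact heQ hx
    · intro x hx
      exact ⟨⟨(hX₀ hx.1).1, hx.2⟩, (hX₀ hx.1).2⟩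
    · -- deletion bound
      have hZF : X₀ \ {e} ⊆ M.E \ {e} := fun x hx => ⟨hX₀E hx.1, hx.2⟩
      have hd := hdel_lam (X₀ \ {e}) hZF
      have hM := hM_lam X₀
      by_cases heX : e ∈ X₀
      · have hFZ : (M.E \ {e}) \ (X₀ \ {e}) = M.E \ X₀ := by
          ext x
          simp only [mem_diff, mem_singleton_iff]
          constructor
          · rintro ⟨⟨hxE, hxe⟩, hx⟩
            exact ⟨hxE, fun hxX => hx ⟨hxX, hxe⟩⟩
          · rintro ⟨hxE, hxX⟩
            exact ⟨⟨hxE, fun h => hxX (h ▸ heX)⟩, fun h => hxX h.1⟩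
        rw [hFZ] at hd
        have hsub := Matroid.rk'_submod (M := M) X₀ (M.E \ {e})
        have hu : X₀ ∪ (M.E \ {e}) = M.E := by
          ext x
          simp only [mem_union, mem_diff, mem_singleton_iff]
          constructor
          · rintro (h | h)
            · exact hX₀E h
            · exact h.1
          · intro hxE
            by_cases hxe : x = e
            · exact Or.inl (hxe ▸ heX)
            · exact Or.inr ⟨hxE, hxe⟩
        have hi : X₀ ∩ (M.E \ {e}) = X₀ \ {e} := by
          ext x
          simp only [mem_inter_iff, mem_diff, mem_singleton_iff]
          exact ⟨fun h => ⟨h.1, h.2.2⟩, fun h => ⟨h.1, hX₀E h.1, h.2⟩⟩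
        rw [hu, hi] at hsub
        omega
      · have hZeq : X₀ \ {e} = X₀ := by
          rw [diff_singleton_eq_self heX]
        rw [hZeq] at hd ⊢
        have hFZ : (M.E \ {e}) \ X₀ = (M.E \ X₀) ∩ (M.E \ {e}) := by
          ext x
          simp only [mem_diff, mem_inter_iff, mem_singleton_iff]
          tauto
        have hsub := Matroid.rk'_submod (M := M) (M.E \ X₀) (M.E \ {e})
        have hu : (M.E \ X₀) ∪ (M.E \ {e}) = M.E := by
          ext x
          simp only [mem_union, mem_diff, mem_singleton_iff]
          constructor
          · rintro (h | h) <;> exact h.1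
          · intro hxE
            by_cases hxX : x ∈ X₀
            · exact Or.inr ⟨hxE, fun h => heX (h ▸ hxX)⟩
            · exact Or.inl ⟨hxE, hxX⟩
        rw [hu, ← hFZ] at hsub
        omega
    · -- contraction bound
      have hZF : X₀ \ {e} ⊆ M.E \ {e} := fun x hx => ⟨hX₀E hx.1, hx.2⟩
      have hc := hcon_lam (X₀ \ {e}) hZF
      have hM := hM_lam X₀
      by_cases heX : e ∈ X₀
      · have hZe : (X₀ \ {e}) ∪ {e} = X₀ := by
          rw [diff_union_self]
          exact union_eq_self_of_subset_right (singleton_subset_iff.2 heX)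
        have hFZ : (M.E \ {e}) \ (X₀ \ {e}) = M.E \ X₀ := by
          ext x
          simp only [mem_diff, mem_singleton_iff]
          constructor
          · rintro ⟨⟨hxE, hxe⟩, hx⟩
            exact ⟨hxE, fun hxX => hx ⟨hxX, hxe⟩⟩
          · rintro ⟨hxE, hxX⟩
            exact ⟨⟨hxE, fun h => hxX (h ▸ heX)⟩, fun h => hxX h.1⟩
        rw [hZe, hFZ] at hc
        have hsub := Matroid.rk'_union_le (M := M) (M.E \ X₀) {e}
        omega
      · have hZeq : X₀ \ {e} = X₀ := by
          rw [diff_singleton_eq_self heX]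
        have hFZe : ((M.E \ {e}) \ X₀) ∪ {e} = M.E \ X₀ := by
          ext x
          simp only [mem_union, mem_diff, mem_singleton_iff]
          constructor
          · rintro (⟨⟨hxE, -⟩, hxX⟩ | rfl)
            · exact ⟨hxE, hxX⟩
            · exact ⟨heE, heX⟩
          · rintro ⟨hxE, hxX⟩
            by_cases hxe : x = e
            · exact Or.inr hxe
            · exact Or.inl ⟨⟨hxE, hxe⟩, hxX⟩
        rw [hZeq] at hc ⊢
        rw [hFZe] at hc
        have hsub := Matroid.rk'_union_le (M := M) X₀ {e}
        omega
  obtain ⟨Z, hQZ, hZR, hdle, hcle⟩ := hZbounds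
  have hdk : (M.del {e}).kappa Q R ≤ k := by
    have h := Matroid.kappa_le (M := M.del {e}) hQZ (by simpa using hZR)
    omega
  have hck : (M.con {e}).kappa Q R ≤ k := by
    have h := Matroid.kappa_le (M := M.con {e}) hQZ (by simpa using hZR)
    omega
  by_contra hcon
  push_neg at hcon
  obtain ⟨hd_ne, hc_ne⟩ := hcon
  have hdk' : (M.del {e}).kappa Q R < k := lt_of_le_of_ne hdk hd_ne
  have hck' : (M.con {e}).kappa Q R < k := lt_of_le_of_ne hck hc_ne
  -- obtain optimal sets for the minors
  have hQdel : Q ⊆ (M.del {e}).E := by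
    rw [Matroid.del_ground]
    exact fun x hx => ⟨hQ hx, fun h => heQ ((mem_singleton_iff.1 h) ▸ hx)⟩
  have hQF : Q ⊆ M.E \ {e} := fun x hx =>
    ⟨hQ hx, fun h => heQ ((mem_singleton_iff.1 h) ▸ hx)⟩
  obtain ⟨X, hQX, hXR, hlamX⟩ := Matroid.kappa_mem (M := M.del {e}) (by simpa using hQF) hQR
  obtain ⟨Y, hQY, hYR, hlamY⟩ := Matroid.kappa_mem (M := M.con {e}) (by simpa using hQF) hQR
  have hXR' : X ⊆ (M.E \ {e}) \ R := by simpa using hXR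
  have hYR' : Y ⊆ (M.E \ {e}) \ R := by simpa using hYR
  have hXF : X ⊆ M.E \ {e} := hXR'.trans diff_subset
  have hYF : Y ⊆ M.E \ {e} := hYR'.trans diff_subset
  have heX : e ∉ X := fun h => (hXF h).2 rfl
  have heY : e ∉ Y := fun h => (hYF h).2 rfl
  have hd := hdel_lam X hXF
  have hc := hcon_lam Y hYF
  have hFYe : ((M.E \ {e}) \ Y) ∪ {e} = M.E \ Y := by
    ext x
    simp only [mem_union, mem_diff, mem_singleton_iff]
    constructor
    · rintro (⟨⟨hxE, -⟩, hxY⟩ | rfl)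
      · exact ⟨hxE, hxY⟩
      · exact ⟨heE, heY⟩
    · rintro ⟨hxE, hxY⟩
      by_cases hxe : x = e
      · exact Or.inr hxe
      · exact Or.inl ⟨⟨hxE, hxe⟩, hxY⟩
  rw [hFYe] at hc
  have sub1 := Matroid.rk'_submod (M := M) X (Y ∪ {e})
  have hXint : X ∩ (Y ∪ {e}) = X ∩ Y := by
    ext x
    simp only [mem_inter_iff, mem_union, mem_singleton_iff]
    constructor
    · rintro ⟨hxX, hx | rfl⟩
      · exact ⟨hxX, hx⟩
      · exact absurd hxX heX
    · rintro ⟨hxX, hxY⟩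
      exact ⟨hxX, Or.inl hxY⟩
  rw [hXint] at sub1
  have sub2 := Matroid.rk'_submod (M := M) ((M.E \ {e}) \ X) (M.E \ Y)
  have hu2 : ((M.E \ {e}) \ X) ∪ (M.E \ Y) = M.E \ (X ∩ Y) := by
    ext x
    simp only [mem_union, mem_diff, mem_inter_iff, mem_singleton_iff]
    constructor
    · rintro (⟨⟨hxE, -⟩, hxX⟩ | ⟨hxE, hxY⟩)
      · exact ⟨hxE, fun h => hxX h.1⟩
      · exact ⟨hxE, fun h => hxY h.2⟩
    · rintro ⟨hxE, hx⟩
      by_cases hxe : x = e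
      · subst hxe
        exact Or.inr ⟨hxE, heY⟩
      · by_cases hxX : x ∈ X
        · exact Or.inr ⟨hxE, fun hxY => hx ⟨hxX, hxY⟩⟩
        · exact Or.inl ⟨⟨hxE, hxe⟩, hxX⟩
  have hi2 : ((M.E \ {e}) \ X) ∩ (M.E \ Y) = M.E \ (X ∪ (Y ∪ {e})) := by
    ext x
    simp only [mem_inter_iff, mem_diff, mem_union, mem_singleton_iff]
    constructor
    · rintro ⟨⟨⟨hxE, hxe⟩, hxX⟩, -, hxY⟩
      exact ⟨hxE, by tauto⟩
    · rintro ⟨hxE, hx⟩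
      push_neg at hx
      exact ⟨⟨⟨hxE, hx.2.2⟩, hx.1⟩, hxE, hx.2.1⟩
  rw [hu2, hi2] at sub2
  have hMP := hM_lam (X ∩ Y)
  have hMU := hM_lam (X ∪ (Y ∪ {e}))
  have kP : k ≤ M.lam (X ∩ Y) := by
    refine Matroid.kappa_le (subset_inter hQX hQY) ?_
    exact fun x hx => ⟨(hXR' hx.1).1.1, (hXR' hx.1).2⟩
  have kU : k ≤ M.lam (X ∪ (Y ∪ {e})) := by
    refine Matroid.kappa_le (hQX.trans subset_union_left) ?_
    intro x hx
    rcases hx with hx | hx | hx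
    · exact ⟨(hXR' hx).1.1, (hXR' hx).2⟩
    · exact ⟨(hYR' hx).1.1, (hYR' hx).2⟩
    · rw [mem_singleton_iff] at hx
      subst hx
      exact ⟨heE, heR⟩
  omega
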